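/- Let R be a commutative ring, π ∈ R, and f : M → N a homomorphism of R-modules. Assume that for every n ∈ ℕ the cokernel of the induced map M/π^nM → N/π^nN is annihilated by π. Then the cokernel of the induced map f̂ : M̂ → N̂ between the π-adic completions is annihilated by π. -/

import Mathlib

section Aux

variable {R : Type*} [CommRing R] (π : R)
variable {N : Type*} [AddCommGroup N] [Module R N]

private lemma aux_exists_smul {n : ℕ} {z : N}
    (hz : z ∈ ((Ideal.span {π}) ^ n • (⊤ : Submodule R N))) :
    ∃ t : N, z = π ^ n • t := by
  rw [Ideal.span_singleton_pow, Submodule.ideal_span_singleton_smul] at hz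
  obtain ⟨t, -, rfl⟩ := hz
  exact ⟨t, rfl⟩

private lemma aux_smul_mem {k m : ℕ} {z : N}
    (hz : z ∈ ((Ideal.span {π}) ^ m • (⊤ : Submodule R N))) :
    π ^ k • z ∈ ((Ideal.span {π}) ^ (k + m) • (⊤ : Submodule R N)) := by
  rw [pow_add, mul_smul]
  exact Submodule.smul_mem_smul (Ideal.pow_mem_pow (Ideal.mem_span_singleton_self π) k) hz

end Aux

/-- Let `R` be a commutative ring, `π ∈ R`, and `f : M → N` a homomorphism of
`R`-modules.  Assume that for every `n ∈ ℕ` the cokernel of the induced map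
`M/π^nM → N/π^nN` is annihilated by `π`.  Then the cokernel of the induced map between the
`π`-adic completions is annihilated by `π`. -/
theorem statement0 {R : Type*} [CommRing R] (π : R)
    {M N : Type*} [AddCommGroup M] [Module R M] [AddCommGroup N] [Module R N]
    (f : M →ₗ[R] N)
    (h : ∀ n : ℕ, ∀ y : N, ∃ x : M,
      π • y - f x ∈ ((Ideal.span {π}) ^ n • (⊤ : Submodule R N))) :
    ∀ y : AdicCompletion (Ideal.span {π}) N,
      ∃ x : AdicCompletion (Ideal.span {π}) M,
        AdicCompletion.map (Ideal.span {π}) f x = π • y := by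
  set I := Ideal.span {π} with hI
  intro y
  obtain ⟨b, rfl⟩ := AdicCompletion.mk_surjective I N y
  choose g hg using h
  -- step function
  have step : ∀ (n : ℕ) (x : M), ∃ x' : M,
      (π • b (n + 1) - f x' ∈ (I ^ (n + 1) • ⊤ : Submodule R N)) ∧
      (π • b n - f x ∈ (I ^ n • ⊤ : Submodule R N) → 1 ≤ n →
        x' - x ∈ (I ^ (n - 1) • ⊤ : Submodule R M)) := by
    intro n x
    match n with
    | 0 =>
      exact ⟨g 1 (b 1), hg 1 (b 1), fun _ h1 => absurd h1 (by omega)⟩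
    | (m + 1) =>
      by_cases hx : π • b (m + 1) - f x ∈ (I ^ (m + 1) • ⊤ : Submodule R N)
      · -- main case
        have hb : b (m + 1) - b (m + 2) ∈ (I ^ (m + 1) • ⊤ : Submodule R N) :=
          SModEq.sub_mem.mp (b.property (by omega : m + 1 ≤ m + 2))
        have hr : π • b (m + 2) - f x ∈ (I ^ (m + 1) • ⊤ : Submodule R N) := by
          have : π • b (m + 2) - f x
              = (π • b (m + 1) - f x) - π • (b (m + 1) - b (m + 2)) := by
            rw [smul_sub]; ring_nf; abel
          rw [this]
          exact Submodule.sub_mem _ hx (Submodule.smul_mem _ _ hb)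
        obtain ⟨t, ht⟩ := aux_exists_smul π hr
        refine ⟨x + π ^ m • g 2 t, ?_, fun _ _ => ?_⟩
        · have key : π • b (m + 2) - f (x + π ^ m • g 2 t)
              = π ^ m • (π • t - f (g 2 t)) := by
            rw [map_add, map_smul, ← sub_sub, ht, smul_sub, smul_smul, ← pow_succ]
          rw [key]
          have := aux_smul_mem π (k := m) (m := 2) (hg 2 t)
          have hmm : m + 2 = (m + 1) + 1 := by omega
          rwa [hmm] at this
        · simpa using aux_smul_mem π (k := m) (m := 0)
            (by simp : (g 2 t : M) ∈ (I ^ 0 • ⊤ : Submodule R M))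
      · exact ⟨g (m + 2) (b (m + 2)), hg (m + 2) (b (m + 2)), fun hx' _ => absurd hx' hx⟩
  choose sf hsf using step
  -- the approximating sequence
  set a : ℕ → M := fun n => Nat.rec 0 (fun k ih => sf k ih) n with ha
  have ha0 : a 0 = 0 := rfl
  have hasucc : ∀ n, a (n + 1) = sf n (a n) := fun n => rfl
  have inv : ∀ n, π • b n - f (a n) ∈ (I ^ n • ⊤ : Submodule R N) := by
    intro n
    induction n with
    | zero => simp
    | succ k ih => rw [hasucc k]; exact (hsf k (a k)).1
  have diff : ∀ m : ℕ, a (m + 2) - a (m + 1) ∈ (I ^ m • ⊤ : Submodule R M) := by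
    intro m
    have := (hsf (m + 1) (a (m + 1))).2 (inv (m + 1)) (by omega)
    rw [← hasucc (m + 1)] at this
    simpa using this
  -- build the Cauchy sequence
  have cauchy : ∀ n : ℕ, a (n + 1) ≡ a (n + 2) [SMOD (I ^ n • ⊤ : Submodule R M)] := by
    intro n
    rw [SModEq.sub_mem]
    simpa using Submodule.neg_mem _ (diff n)
  refine ⟨AdicCompletion.mk I M (AdicCompletion.AdicCauchySequence.mk I M (fun n => a (n + 1)) cauchy), ?_⟩
  apply AdicCompletion.ext
  intro n
  rw [AdicCompletion.map_val_apply, AdicCompletion.val_smul_apply]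
  simp only [AdicCompletion.mk_apply_coe, AdicCompletion.AdicCauchySequence.mk_coe, Submodule.mkQ_apply,
    LinearMap.reduceModIdeal_apply]
  rw [← Submodule.Quotient.mk_smul, Submodule.Quotient.eq]
  have h1 : π • b (n + 1) - f (a (n + 1)) ∈ (I ^ n • ⊤ : Submodule R N) :=
    Submodule.smul_mono_left (Ideal.pow_le_pow_right (by omega)) (inv (n + 1))
  have h2 : b n - b (n + 1) ∈ (I ^ n • ⊤ : Submodule R N) :=
    SModEq.sub_mem.mp (b.property (by omega : n ≤ n + 1))
  have : π • b n - f (a (n + 1))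
      = (π • b (n + 1) - f (a (n + 1))) + π • (b n - b (n + 1)) := by
    rw [smul_sub]; abel
  have h3 : π • b n - f (a (n + 1)) ∈ (I ^ n • ⊤ : Submodule R N) := by
    rw [this]
    exact Submodule.add_mem _ h1 (Submodule.smul_mem _ _ h2)
  simpa [neg_sub] using Submodule.neg_mem _ h3
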